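/- arXiv:2010.11559 — 3 statements merged into one kernel-verified Lean document; each statement's English description precedes it below -/
import Mathlib

section
/- Let B ∈ ℝ^{n×|E|} be the node-arc incidence matrix of a graph and A*w = B Diag(w) B^T. Then the matrix representation of the composition A A* : ℝ^{|E|} → ℝ^{|E|} is 2I + |B|^T|B|, where |B| is the entrywise absolute value of B. Equivalently, A(A*w) = (2I + |B|^T|B|) w for every w ∈ ℝ^{|E|}. -/
open Matrix Finset

lemma sum_ind {n : ℕ} (a b c d : Fin n) :
    (∑ i : Fin n, ((if i = a then (1:ℝ) else 0) - (if i = b then 1 else 0)) *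
      ((if i = c then (1:ℝ) else 0) - (if i = d then 1 else 0))) =
    ((if a = c then (1:ℝ) else 0) - (if a = d then 1 else 0))
      - ((if b = c then (1:ℝ) else 0) - (if b = d then 1 else 0)) := by
  simp [sub_mul, mul_sub, Finset.sum_sub_distrib, ite_and, eq_comm]; ring

lemma abs_col {n : ℕ} {a b : Fin n} (hab : a ≠ b) (i : Fin n) :
    |(if i = a then (1:ℝ) else 0) - (if i = b then 1 else 0)| =
    (if i = a then (1:ℝ) else 0) + (if i = b then 1 else 0) := by
  by_cases h1 : i = a <;> by_cases h2 : i = b <;> simp_all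

lemma sum_abs {n : ℕ} (a b c d : Fin n) (hab : a ≠ b) (hcd : c ≠ d) :
    (∑ i : Fin n, |(if i = a then (1:ℝ) else 0) - (if i = b then 1 else 0)| *
      |(if i = c then (1:ℝ) else 0) - (if i = d then 1 else 0)|) =
    ((if a = c then (1:ℝ) else 0) + (if a = d then 1 else 0))
      + ((if b = c then (1:ℝ) else 0) + (if b = d then 1 else 0)) := by
  simp only [abs_col hab, abs_col hcd]
  simp [add_mul, mul_add, Finset.sum_add_distrib, ite_and, eq_comm]; ring

lemma key_off {n : ℕ} (a b c d : Fin n) (hab : a ≠ b) (hcd : c ≠ d)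
    (h : ¬((a = c ∧ b = d) ∨ (a = d ∧ b = c))) :
    (((if a = c then (1:ℝ) else 0) - (if a = d then 1 else 0))
      - ((if b = c then (1:ℝ) else 0) - (if b = d then 1 else 0)))^2 =
    ((if a = c then (1:ℝ) else 0) + (if a = d then 1 else 0))
      + ((if b = c then (1:ℝ) else 0) + (if b = d then 1 else 0)) := by
  by_cases h1 : a = c <;> by_cases h2 : a = d <;> by_cases h3 : b = c <;>
    by_cases h4 : b = d <;> simp_all

/-- For the node-arc incidence matrix `B` of a graph (columns `e_{s e} − e_{t e}`,
distinct endpoints, each unordered pair appearing at most once), the composition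
`A A*` (where `A*w = B Diag(w) Bᵀ` and `A X = diag(Bᵀ X B)`) has matrix
representation `2I + |B|ᵀ|B|`: for every `w`, `A(A*w) = (2I + |B|ᵀ|B|) w`. -/
theorem incidence_AAstar (n m : ℕ) (s t : Fin m → Fin n)
    (hst : ∀ e, s e ≠ t e)
    (hdist : ∀ e f, e ≠ f →
      ¬((s e = s f ∧ t e = t f) ∨ (s e = t f ∧ t e = s f)))
    (B : Matrix (Fin n) (Fin m) ℝ)
    (hB : B = Matrix.of fun i e =>
      (if i = s e then (1 : ℝ) else 0) - (if i = t e then 1 else 0))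
    (w : Fin m → ℝ) :
    (fun e => (Bᵀ * (B * Matrix.diagonal w * Bᵀ) * B) e e) =
      ((2 : ℝ) • (1 : Matrix (Fin m) (Fin m) ℝ) +
        (Matrix.of fun i e => |B i e|)ᵀ * (Matrix.of fun i e => |B i e|)).mulVec w := by
  funext e
  have hassoc : Bᵀ * (B * Matrix.diagonal w * Bᵀ) * B
      = (Bᵀ * B) * Matrix.diagonal w * (Bᵀ * B) := by
    simp [Matrix.mul_assoc]
  have hL : (Bᵀ * (B * Matrix.diagonal w * Bᵀ) * B) e e
      = ∑ f, (∑ i, B i e * B i f)^2 * w f := by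
    rw [hassoc, Matrix.mul_apply]
    refine Finset.sum_congr rfl fun f _ => ?_
    have hc : (∑ i, B i f * B i e) = ∑ i, B i e * B i f := by
      simp [mul_comm]
    rw [Matrix.mul_diagonal]
    simp only [Matrix.mul_apply, Matrix.transpose_apply, hc]
    ring
  rw [hL, Matrix.mulVec, dotProduct]
  refine Finset.sum_congr rfl fun f _ => ?_
  simp only [Matrix.add_apply, Matrix.smul_apply, Matrix.one_apply, Matrix.mul_apply,
    Matrix.transpose_apply, Matrix.of_apply, smul_eq_mul]
  congr 1
  subst hB
  simp only [Matrix.of_apply]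
  rw [sum_ind, sum_abs _ _ _ _ (hst e) (hst f)]
  by_cases hef : e = f
  · subst hef
    simp [hst e, (hst e).symm]
    norm_num
  · rw [key_off _ _ _ _ (hst e) (hst f) (hdist e f hef)]
    simp [hef]
end

section
/- (Descent property of inexact proximal DCA) Let g be convex and h convex and differentiable, and define f(w) = g(w) − h(A*w). Fix σ_k > 0 and w^k, and let f^k(w) = g(w) − h(A*w^k) − ⟨∇h(A*w^k), A*w − A*w^k⟩ + (σ_k/2)‖w − w^k‖² + (σ_k/2)‖A*w − A*w^k‖². Suppose w^{k+1} minimizes w ↦ f^k(w) + ⟨δ^k, w⟩ and the error vector satisfies ‖δ^k‖ ≤ (σ_k/4)‖w^{k+1} − w^k‖ + σ_k‖A*w^{k+1} − A*w^k‖²/(2‖w^{k+1} − w^k‖). Then f(w^{k+1}) ≤ f(w^k) − (σ_k/4)‖w^{k+1} − w^k‖². -/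
open scoped RealInnerProductSpace

lemma convex_grad_ineq {F : Type*} [NormedAddCommGroup F] [InnerProductSpace ℝ F]
    [CompleteSpace F] (h : F → ℝ) (h' : F → F)
    (hh : ConvexOn ℝ Set.univ h) (hgrad : ∀ x, HasGradientAt h (h' x) x)
    (x y : F) : h x + ⟪h' x, y - x⟫ ≤ h y := by
  set φ : ℝ → ℝ := fun t => h (x + t • (y - x)) with hφ
  have hφc : ConvexOn ℝ Set.univ φ := by
    have h0 : φ = h ∘ (AffineMap.lineMap x y : ℝ →ᵃ[ℝ] F) := by
      funext t; simp [hφ, AffineMap.lineMap_apply]; abel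
    have := hh.comp_affineMap (AffineMap.lineMap x y : ℝ →ᵃ[ℝ] F)
    rw [← h0] at this
    simpa using this
  have hderiv : HasDerivAt φ ⟪h' x, y - x⟫ 0 := by
    have h1 : HasFDerivAt h ((InnerProductSpace.toDual ℝ F) (h' x)) x := (hgrad x).hasFDerivAt
    have hc : HasDerivAt (fun t : ℝ => x + t • (y - x)) (y - x) 0 := by
      simpa using ((hasDerivAt_id (0:ℝ)).smul_const (y - x)).const_add x
    have h1' : HasFDerivAt h ((InnerProductSpace.toDual ℝ F) (h' x)) (x + (0:ℝ) • (y - x)) := by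
      simpa using h1
    have := h1'.comp_hasDerivAt (0:ℝ) hc
    simpa [InnerProductSpace.toDual_apply_apply, hφ, Function.comp_def] using this
  have := hφc.le_slope_of_hasDerivAt (Set.mem_univ 0) (Set.mem_univ 1) one_pos hderiv
  rw [slope_def_field] at this
  simp only [hφ, one_smul, zero_smul, add_zero, add_sub_cancel] at this
  have : ⟪h' x, y - x⟫ ≤ h (x + (y - x)) - h x := by
    simpa [div_one] using this
  simpa [add_sub_cancel] using by linarith [this]

/-- Descent property of the inexact proximal DCA: if `w^{k+1}` minimizes the
majorized subproblem `f^k + ⟨δ^k, ·⟩` and the error vector `δ^k` satisfies the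
stopping condition, then `f(w^{k+1}) ≤ f(w^k) − (σ_k/4)‖w^{k+1} − w^k‖²`. -/
theorem inexact_proximal_dca_descent
    {E F : Type*} [NormedAddCommGroup E] [InnerProductSpace ℝ E]
    [NormedAddCommGroup F] [InnerProductSpace ℝ F] [CompleteSpace F]
    (A : E →ₗ[ℝ] F) (g : E → ℝ) (h : F → ℝ) (h' : F → F)
    (hg : ConvexOn ℝ Set.univ g) (hh : ConvexOn ℝ Set.univ h)
    (hgrad : ∀ x, HasGradientAt h (h' x) x)
    (σ : ℝ) (hσ : 0 < σ) (wk wk1 δ : E) (hne : wk1 ≠ wk)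
    (f : E → ℝ) (hf : f = fun w => g w - h (A w))
    (fk : E → ℝ)
    (hfk : fk = fun w => g w - h (A wk) - ⟪h' (A wk), A w - A wk⟫
      + σ / 2 * ‖w - wk‖ ^ 2 + σ / 2 * ‖A w - A wk‖ ^ 2)
    (hmin : ∀ w, fk wk1 + ⟪δ, wk1⟫ ≤ fk w + ⟪δ, w⟫)
    (herr : ‖δ‖ ≤ σ / 4 * ‖wk1 - wk‖ +
      σ * ‖A wk1 - A wk‖ ^ 2 / (2 * ‖wk1 - wk‖)) :
    f wk1 ≤ f wk - σ / 4 * ‖wk1 - wk‖ ^ 2 := by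
  have hnorm_pos : (0:ℝ) < ‖wk1 - wk‖ := by
    rw [norm_pos_iff, sub_ne_zero]; exact hne
  -- fk wk = f wk
  have h1 : fk wk = f wk := by simp [hfk, hf]
  -- minimizing property at w = wk
  have h2 : fk wk1 ≤ f wk + ⟪δ, wk - wk1⟫ := by
    have := hmin wk
    rw [h1] at this
    have : fk wk1 ≤ f wk + (⟪δ, wk⟫ - ⟪δ, wk1⟫) := by linarith
    rwa [← inner_sub_right] at this
  -- Cauchy-Schwarz bound on inner product
  have h3 : ⟪δ, wk - wk1⟫ ≤ ‖δ‖ * ‖wk1 - wk‖ := by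
    calc ⟪δ, wk - wk1⟫ ≤ ‖δ‖ * ‖wk - wk1‖ := real_inner_le_norm δ _
    _ = ‖δ‖ * ‖wk1 - wk‖ := by rw [norm_sub_rev]
  have h4 : ‖δ‖ * ‖wk1 - wk‖ ≤ σ / 4 * ‖wk1 - wk‖ ^ 2 + σ / 2 * ‖A wk1 - A wk‖ ^ 2 := by
    have := mul_le_mul_of_nonneg_right herr (le_of_lt hnorm_pos)
    calc ‖δ‖ * ‖wk1 - wk‖
        ≤ (σ / 4 * ‖wk1 - wk‖ + σ * ‖A wk1 - A wk‖ ^ 2 / (2 * ‖wk1 - wk‖)) * ‖wk1 - wk‖ := this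
      _ = σ / 4 * ‖wk1 - wk‖ ^ 2 + σ / 2 * ‖A wk1 - A wk‖ ^ 2 := by
          field_simp
  -- convexity of h: f wk1 ≤ fk wk1 - σ/2‖wk1-wk‖² - σ/2‖Awk1-Awk‖²
  have h5 : f wk1 ≤ fk wk1 - σ / 2 * ‖wk1 - wk‖ ^ 2 - σ / 2 * ‖A wk1 - A wk‖ ^ 2 := by
    have := convex_grad_ineq h h' hh hgrad (A wk) (A wk1)
    simp only [hf, hfk]
    linarith
  linarith
end

section
/- (Bounded level sets) Suppose S ∈ S^n is positive definite and the graph is connected, so that A*1 + J is positive definite. Then the condition {w ∈ ℝ^{|E|}_+ : ⟨S, A*w⟩ ≤ 0} = {0} holds, and the level set {w : −log det(A*w + J) + ⟨S, A*w⟩ + δ(w|ℝ^{|E|}_+) ≤ α} is bounded for every α ∈ ℝ; consequently the function is bounded below and attains its minimum on a nonempty bounded set. -/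
open Matrix Finset

lemma aux_trace_diag {m : ℕ} (M : Matrix (Fin m) (Fin m) ℝ) (w : Fin m → ℝ) :
    (M * diagonal w).trace = ∑ e, M e e * w e := by
  simp [Matrix.trace, Matrix.diag, Matrix.mul_diagonal]

lemma aux_trace {n m : ℕ} (S : Matrix (Fin n) (Fin n) ℝ) (B : Matrix (Fin n) (Fin m) ℝ)
    (w : Fin m → ℝ) :
    (S * (B * diagonal w * Bᵀ)).trace = ∑ e, (Bᵀ * S * B) e e * w e := by
  have h1 : S * (B * diagonal w * Bᵀ) = (S * B * diagonal w) * Bᵀ := by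
    simp only [Matrix.mul_assoc]
  rw [h1, Matrix.trace_mul_comm]
  have h2 : Bᵀ * (S * B * diagonal w) = (Bᵀ * S * B) * diagonal w := by
    simp only [Matrix.mul_assoc]
  rw [h2, aux_trace_diag]

lemma aux_psd_det_posdef {k : ℕ} {M : Matrix (Fin k) (Fin k) ℝ} (h : M.PosSemidef)
    (hd : 0 < M.det) : M.PosDef := by
  refine posDef_iff_dotProduct_mulVec.2 ⟨h.1, fun x hx => ?_⟩
  rcases (h.dotProduct_mulVec_nonneg x).lt_or_eq with hlt | heq
  · exact hlt
  · exfalso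
    have h0 := (h.dotProduct_mulVec_zero_iff x).1 heq.symm
    exact hx (Matrix.eq_zero_of_mulVec_eq_zero hd.ne' h0)

lemma aux_quad_eq {n m : ℕ} (S : Matrix (Fin n) (Fin n) ℝ) (B : Matrix (Fin n) (Fin m) ℝ)
    (e : Fin m) :
    (Bᵀ * S * B) e e = (fun i => B i e) ⬝ᵥ S *ᵥ (fun i => B i e) := by
  simp only [Matrix.mul_apply, Matrix.transpose_apply, dotProduct, Matrix.mulVec,
    dotProduct, Finset.sum_mul, Finset.mul_sum]
  rw [Finset.sum_comm]
  congr 1; ext j; congr 1; ext i; ring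

lemma aux_J_psd {n : ℕ} (J : Matrix (Fin n) (Fin n) ℝ)
    (hJ : J = Matrix.of fun _ _ => (1 : ℝ) / n) : J.PosSemidef := by
  refine posSemidef_iff_dotProduct_mulVec.2 ⟨?_, ?_⟩
  · ext i j
    simp [hJ, Matrix.conjTranspose_apply]
  · intro x
    have hx : star x = x := by simp
    have h1 : star x ⬝ᵥ J *ᵥ x = (1 / n) * (∑ i, x i) ^ 2 := by
      rw [hx]
      simp only [hJ, dotProduct, Matrix.mulVec, Matrix.of_apply, dotProduct]
      rw [← Finset.mul_sum]
      simp only [← Finset.sum_mul]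
      ring
    rw [h1]
    positivity

lemma aux_L_psd {n m : ℕ} (B : Matrix (Fin n) (Fin m) ℝ) (w : Fin m → ℝ)
    (hw : ∀ e, 0 ≤ w e) : (B * diagonal w * Bᵀ).PosSemidef := by
  have hD : (diagonal w).PosSemidef := Matrix.posSemidef_diagonal_iff.2 hw
  have := hD.mul_mul_conjTranspose_same B
  simpa using this

lemma aux_sqrt_succ (t : ℝ) (ht : 0 ≤ t) : Real.sqrt (t + 1) ≤ Real.sqrt t + 1 := by
  nlinarith [Real.sq_sqrt ht, Real.sq_sqrt (by linarith : (0:ℝ) ≤ t + 1),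
    Real.sqrt_nonneg t, Real.sqrt_nonneg (t+1)]

lemma aux_t_bound (c N α t : ℝ) (hc : 0 < c) (hn : 1 ≤ N) (ht : 0 ≤ t)
    (h : c * t ≤ α + N * Real.log (t + 1)) :
    t ≤ (α + 2 * N + 4 * N ^ 2 / c) * (4 / (3 * c)) := by
  have h1 : Real.log (t + 1) ≤ 2 * Real.sqrt (t + 1) := by
    have hp : (0:ℝ) < Real.sqrt (t + 1) := Real.sqrt_pos.2 (by linarith)
    have := Real.log_le_sub_one_of_pos hp
    rw [Real.log_sqrt (by linarith)] at this
    linarith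
  have h2 := aux_sqrt_succ t ht
  have h3 : Real.sqrt t ≤ t * c / (8 * N) + 2 * N / c := by
    have key : 0 ≤ (Real.sqrt t * c - 4 * N) ^ 2 := sq_nonneg _
    have hs := Real.sq_sqrt ht
    have key2 : 0 ≤ t * c ^ 2 - 8 * N * c * Real.sqrt t + 16 * N ^ 2 := by
      have he : (Real.sqrt t * c - 4 * N) ^ 2 = t * c ^ 2 - 8 * N * c * Real.sqrt t + 16 * N ^ 2 := by
        rw [sub_sq, mul_pow, hs]; ring
      linarith [he ▸ key]
    rw [div_add_div _ _ (by positivity) (by positivity), le_div_iff₀ (by positivity)]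
    nlinarith [key2]
  have h4 : c * t ≤ α + 2 * N + 2 * N * Real.sqrt t := by nlinarith [Real.sqrt_nonneg t]
  have h5 : 2 * N * (t * c / (8 * N) + 2 * N / c) = c * t / 4 + 4 * N ^ 2 / c := by
    field_simp; ring
  have h6 : c * t ≤ α + 2 * N + (c * t / 4 + 4 * N ^ 2 / c) := by nlinarith [Real.sqrt_nonneg t]
  rw [show (α + 2 * N + 4 * N ^ 2 / c) * (4 / (3 * c)) = (α + 2 * N + 4 * N ^ 2 / c) * 4 / (3 * c) by ring, le_div_iff₀ (by positivity : (0:ℝ) < 3 * c)]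
  nlinarith

/-- Bounded level sets: if `S` is positive definite and the graph is connected
(so that `A*1 + J` is positive definite), then the recession cone condition
`{w ≥ 0 : ⟨S, A*w⟩ ≤ 0} = {0}` holds, every level set of
`w ↦ −log det(A*w + J) + ⟨S, A*w⟩` over the feasible region `w ≥ 0` is
bounded, and the objective is bounded below and attains its minimum. -/
theorem logdet_bounded_level_sets (n m : ℕ) (s t : Fin m → Fin n)
    (hst : ∀ e, s e ≠ t e)
    (B : Matrix (Fin n) (Fin m) ℝ)
    (hB : B = Matrix.of fun i e =>
      (if i = s e then (1 : ℝ) else 0) - (if i = t e then 1 else 0))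
    (S : Matrix (Fin n) (Fin n) ℝ) (hS : S.PosDef)
    (L : (Fin m → ℝ) → Matrix (Fin n) (Fin n) ℝ)
    (hL : L = fun w => B * Matrix.diagonal w * Bᵀ)
    (J : Matrix (Fin n) (Fin n) ℝ) (hJ : J = Matrix.of fun _ _ => (1 : ℝ) / n)
    (hpd : (L (fun _ => 1) + J).PosDef)
    (gfun : (Fin m → ℝ) → ℝ)
    (hg : gfun = fun v => -Real.log (L v + J).det + Matrix.trace (S * L v)) :
    ({w : Fin m → ℝ | (∀ e, 0 ≤ w e) ∧ Matrix.trace (S * L w) ≤ 0} = {0}) ∧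
    (∀ α : ℝ, Bornology.IsBounded
      {w : Fin m → ℝ | (∀ e, 0 ≤ w e) ∧ (L w + J).PosDef ∧ gfun w ≤ α}) ∧
    (∃ w0 : Fin m → ℝ, (∀ e, 0 ≤ w0 e) ∧ (L w0 + J).PosDef ∧
      ∀ w : Fin m → ℝ, (∀ e, 0 ≤ w e) → (L w + J).PosDef → gfun w0 ≤ gfun w) := by
  have hq : ∀ e, 0 < (Bᵀ * S * B) e e := by
    intro e
    rw [aux_quad_eq]
    have hx : (fun i => B i e) ≠ 0 := by
      intro h
      have h1 := congrFun h (s e)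
      rw [hB] at h1
      simp [hst e] at h1
    simpa using hS.dotProduct_mulVec_pos hx
  have htr : ∀ w : Fin m → ℝ, Matrix.trace (S * L w) = ∑ e, (Bᵀ * S * B) e e * w e := by
    intro w
    simp only [hL]
    exact aux_trace S B w
  have part1 : {w : Fin m → ℝ | (∀ e, 0 ≤ w e) ∧ Matrix.trace (S * L w) ≤ 0} = {0} := by
    ext w
    simp only [Set.mem_setOf_eq, Set.mem_singleton_iff]
    constructor
    · rintro ⟨hw, hle⟩
      rw [htr] at hle
      have hnn : ∀ e ∈ Finset.univ, 0 ≤ (Bᵀ * S * B) e e * w e :=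
        fun e _ => mul_nonneg (hq e).le (hw e)
      have hz := (Finset.sum_eq_zero_iff_of_nonneg hnn).1
        (le_antisymm hle (Finset.sum_nonneg hnn))
      funext e
      have he := hz e (Finset.mem_univ e)
      have hwe : w e = 0 := by
        rcases mul_eq_zero.1 he with h | h
        · exact absurd h (hq e).ne'
        · exact h
      simpa using hwe
    · rintro rfl
      refine ⟨fun e => le_rfl, ?_⟩
      rw [htr]
      simp
  have part2 : ∀ α : ℝ, Bornology.IsBounded
      {w : Fin m → ℝ | (∀ e, 0 ≤ w e) ∧ (L w + J).PosDef ∧ gfun w ≤ α} := by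
    intro α
    rcases Nat.eq_zero_or_pos m with hm | hm
    · subst hm
      have hsub : ({w : Fin 0 → ℝ | (∀ e, 0 ≤ w e) ∧ (L w + J).PosDef ∧ gfun w ≤ α}).Subsingleton :=
        fun a _ b _ => Subsingleton.elim a b
      exact hsub.finite.isBounded
    · have hne : (Finset.univ : Finset (Fin m)).Nonempty := ⟨⟨0, hm⟩, Finset.mem_univ _⟩
      have hn : 0 < n := (s ⟨0, hm⟩).pos
      have hn1 : (1:ℝ) ≤ (n:ℝ) := by exact_mod_cast hn
      set c : ℝ := Finset.univ.inf' hne (fun e => (Bᵀ * S * B) e e) with hcdef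
      have hc : 0 < c := (Finset.lt_inf'_iff hne).2 fun e _ => hq e
      have hcle : ∀ e : Fin m, c ≤ (Bᵀ * S * B) e e :=
        fun e => Finset.inf'_le _ (Finset.mem_univ e)
      set R : ℝ := max (((α + Real.log (Nat.factorial n)) + 2 * (n:ℝ) + 4 * (n:ℝ) ^ 2 / c)
        * (4 / (3 * c))) 0 with hRdef
      refine (Metric.isBounded_closedBall (x := (0 : Fin m → ℝ)) (r := R)).subset ?_
      rintro w ⟨hw, hpdw, hgw⟩
      have ht0 : (0:ℝ) ≤ ∑ e, w e := Finset.sum_nonneg fun e _ => hw e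
      have hBent : ∀ i e, |B i e| ≤ 1 := by
        intro i e
        rw [hB]
        dsimp only [Matrix.of_apply]
        split_ifs <;> norm_num
      have hLent : ∀ i j, |(L w + J) i j| ≤ (∑ e, w e) + 1 := by
        intro i j
        have h1 : (L w) i j = ∑ e, B i e * w e * B j e := by
          simp only [hL]
          rw [Matrix.mul_apply]
          refine Finset.sum_congr rfl fun e _ => ?_
          rw [Matrix.mul_diagonal, Matrix.transpose_apply]
        have h2 : |(L w) i j| ≤ ∑ e, w e := by
          rw [h1]
          calc |∑ e, B i e * w e * B j e| ≤ ∑ e, |B i e * w e * B j e| :=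
                Finset.abs_sum_le_sum_abs _ _
            _ ≤ ∑ e, w e := Finset.sum_le_sum fun e _ => by
                rw [abs_mul, abs_mul, abs_of_nonneg (hw e)]
                calc |B i e| * w e * |B j e| ≤ 1 * w e * 1 :=
                      mul_le_mul (mul_le_mul (hBent i e) le_rfl (hw e) zero_le_one)
                        (hBent j e) (abs_nonneg _) (by simpa using hw e)
                  _ = w e := by ring
        have hJent : |J i j| ≤ 1 := by
          rw [hJ]
          dsimp only [Matrix.of_apply]
          rw [abs_of_nonneg (by positivity)]
          rw [div_le_one (by exact_mod_cast hn)]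
          exact hn1
        calc |(L w + J) i j| = |(L w) i j + J i j| := by rw [Matrix.add_apply]
          _ ≤ |(L w) i j| + |J i j| := abs_add_le _ _
          _ ≤ (∑ e, w e) + 1 := add_le_add h2 hJent
      have hdet : (L w + J).det ≤ (Nat.factorial n : ℝ) * ((∑ e, w e) + 1) ^ n := by
        have habs : ∀ i j, AbsoluteValue.abs ((L w + J) i j) ≤ (∑ e, w e) + 1 := hLent
        have hd := Matrix.det_le habs
        rw [Fintype.card_fin] at hd
        calc (L w + J).det ≤ |(L w + J).det| := le_abs_self _
          _ ≤ Nat.factorial n • ((∑ e, w e) + 1) ^ n := hd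
          _ = (Nat.factorial n : ℝ) * ((∑ e, w e) + 1) ^ n := nsmul_eq_mul _ _
      have hdetpos : 0 < (L w + J).det := hpdw.det_pos
      have hkey : c * (∑ e, w e) ≤ (α + Real.log (Nat.factorial n))
          + (n:ℝ) * Real.log ((∑ e, w e) + 1) := by
        have h5 : c * (∑ e, w e) ≤ Matrix.trace (S * L w) := by
          rw [htr w, Finset.mul_sum]
          exact Finset.sum_le_sum fun e _ => mul_le_mul_of_nonneg_right (hcle e) (hw e)
        have h6 : Matrix.trace (S * L w) ≤ α + Real.log (L w + J).det := by
          rw [hg] at hgw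
          dsimp only at hgw
          linarith
        have h7 : Real.log (L w + J).det ≤
            Real.log ((Nat.factorial n : ℝ) * ((∑ e, w e) + 1) ^ n) :=
          Real.log_le_log hdetpos hdet
        rw [Real.log_mul (by positivity) (by positivity), Real.log_pow] at h7
        linarith
      have htle := aux_t_bound c (n:ℝ) (α + Real.log (Nat.factorial n)) (∑ e, w e)
        hc hn1 ht0 hkey
      have htR : (∑ e, w e) ≤ R := le_trans htle (le_max_left _ _)
      rw [Metric.mem_closedBall, dist_zero_right,
        pi_norm_le_iff_of_nonneg (le_max_right _ _)]
      intro e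
      rw [Real.norm_eq_abs, abs_of_nonneg (hw e)]
      exact le_trans (Finset.single_le_sum (fun i _ => hw i) (Finset.mem_univ e)) htR
  refine ⟨part1, part2, ?_⟩
  set w1 : Fin m → ℝ := fun _ => 1 with hw1
  set α0 : ℝ := gfun w1 with hα0
  have hLpsd : ∀ w : Fin m → ℝ, (∀ e, 0 ≤ w e) → (L w + J).PosSemidef := by
    intro w hw
    simp only [hL]
    exact (aux_L_psd B w hw).add (aux_J_psd J hJ)
  have hmem_iff : ∀ w : Fin m → ℝ, (∀ e, 0 ≤ w e) →
      (((L w + J).PosDef ∧ gfun w ≤ α0) ↔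
        Real.exp (Matrix.trace (S * L w) - α0) ≤ (L w + J).det) := by
    intro w hw
    constructor
    · rintro ⟨hpdw, hle⟩
      rw [hg] at hle
      dsimp only at hle
      have hdp := hpdw.det_pos
      rw [← Real.exp_log hdp]
      exact Real.exp_le_exp.2 (by linarith)
    · intro hle
      have hdp : 0 < (L w + J).det := lt_of_lt_of_le (Real.exp_pos _) hle
      have hpdw : (L w + J).PosDef := aux_psd_det_posdef (hLpsd w hw) hdp
      refine ⟨hpdw, ?_⟩
      rw [hg]
      dsimp only
      have hlog := Real.log_le_log (Real.exp_pos _) hle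
      rw [Real.log_exp] at hlog
      linarith
  set K : Set (Fin m → ℝ) := {w | (∀ e, 0 ≤ w e) ∧
    Real.exp (Matrix.trace (S * L w) - α0) ≤ (L w + J).det} with hK
  have hKeq : K = {w | (∀ e, 0 ≤ w e) ∧ (L w + J).PosDef ∧ gfun w ≤ α0} := by
    ext w
    simp only [hK, Set.mem_setOf_eq]
    constructor
    · rintro ⟨hw, h⟩; exact ⟨hw, (hmem_iff w hw).2 h⟩
    · rintro ⟨hw, h⟩; exact ⟨hw, (hmem_iff w hw).1 h⟩
  have hcontL : Continuous fun w : Fin m → ℝ => L w + J := by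
    simp only [hL]
    exact ((continuous_const.matrix_mul (continuous_id.matrix_diagonal)).matrix_mul
      continuous_const).add continuous_const
  have hcontdet : Continuous fun w : Fin m → ℝ => (L w + J).det := hcontL.matrix_det
  have hconttr : Continuous fun w : Fin m → ℝ => Matrix.trace (S * L w) := by
    simp only [hL]
    exact (continuous_const.matrix_mul ((continuous_const.matrix_mul
      (continuous_id.matrix_diagonal)).matrix_mul continuous_const)).matrix_trace
  have hKclosed : IsClosed K := by
    rw [hK, Set.setOf_and]
    have h1 : IsClosed {w : Fin m → ℝ | ∀ e, 0 ≤ w e} := by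
      have he : {w : Fin m → ℝ | ∀ e, 0 ≤ w e} = ⋂ e, {w | 0 ≤ w e} := by
        ext; simp
      rw [he]
      exact isClosed_iInter fun e => isClosed_le continuous_const (continuous_apply e)
    have h2 : IsClosed {w : Fin m → ℝ |
        Real.exp (Matrix.trace (S * L w) - α0) ≤ (L w + J).det} :=
      isClosed_le (Real.continuous_exp.comp (hconttr.sub continuous_const)) hcontdet
    exact h1.inter h2
  have hKbdd : Bornology.IsBounded K := hKeq ▸ part2 α0
  have hKcompact : IsCompact K := Metric.isCompact_of_isClosed_isBounded hKclosed hKbdd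
  have hw1K : w1 ∈ K := by
    rw [hKeq]
    exact ⟨fun e => zero_le_one, hpd, le_rfl⟩
  have hgcont : ContinuousOn gfun K := by
    rw [hg]
    refine ContinuousOn.add (ContinuousOn.neg ?_) hconttr.continuousOn
    refine Real.continuousOn_log.comp hcontdet.continuousOn ?_
    intro w hwK
    rw [hKeq] at hwK
    simp [hwK.2.1.det_pos.ne']
  obtain ⟨w0, hw0K, hw0min⟩ := hKcompact.exists_isMinOn ⟨w1, hw1K⟩ hgcont
  rw [hKeq] at hw0K
  refine ⟨w0, hw0K.1, hw0K.2.1, ?_⟩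
  intro w hw hpdw
  by_cases hle : gfun w ≤ α0
  · exact isMinOn_iff.1 hw0min w (by rw [hKeq]; exact ⟨hw, hpdw, hle⟩)
  · linarith [hw0K.2.2, not_le.1 hle]
end
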